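/- arXiv:2505.13927 — 2 statements merged into one kernel-verified Lean document; each statement's English description precedes it below -/
import Mathlib

section
/- Let Z and W be symmetric positive semidefinite n×n real matrices with Z ⪰ W, Z·1 = 0, and null(W) = span(1). Then the diagonal matrix D = diag(Z) is positive definite. -/
open Matrix

lemma psd_diag_nonneg {n : ℕ} (M : Matrix (Fin n) (Fin n) ℝ) (hM : M.PosSemidef)
    (i : Fin n) : 0 ≤ M i i := by
  have := hM.dotProduct_mulVec_nonneg (Pi.single i 1)
  simpa [dotProduct, Matrix.mulVec, Pi.single_apply] using this

lemma psd_col_zero {n : ℕ} (M : Matrix (Fin n) (Fin n) ℝ) (hM : M.PosSemidef)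
    (i : Fin n) (hMi : M i i = 0) : ∀ j, M j i = 0 := by
  obtain ⟨B, rfl⟩ : ∃ B : Matrix (Fin n) (Fin n) ℝ, M = Bᴴ * B := by
    open scoped MatrixOrder Matrix.Norms.L2Operator in
    exact CStarAlgebra.nonneg_iff_eq_star_mul_self.mp hM.nonneg
  have hcol : ∀ k, B k i = 0 := by
    have h : ∑ k, B k i ^ 2 = 0 := by
      have := hMi
      simp [Matrix.mul_apply, Matrix.conjTranspose_apply, sq] at this ⊢
      convert this using 2
    intro k
    have := (Finset.sum_eq_zero_iff_of_nonneg (fun k _ => sq_nonneg (B k i))).mp h k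
      (Finset.mem_univ k)
    exact pow_eq_zero_iff (by norm_num) |>.mp this
  intro j
  simp [Matrix.mul_apply, Matrix.conjTranspose_apply, hcol]

theorem stmt_0 (n : ℕ) (hn : 2 ≤ n) (Z W : Matrix (Fin n) (Fin n) ℝ)
    (hZ : Z.PosSemidef) (hW : W.PosSemidef) (hZW : (Z - W).PosSemidef)
    (hZ1 : Z *ᵥ (fun _ => (1 : ℝ)) = 0)
    (hWnull : ∀ x : Fin n → ℝ, W *ᵥ x = 0 ↔ ∃ c : ℝ, x = fun _ => c) :
    (Matrix.diagonal (fun i => Z i i)).PosDef := by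
  rw [Matrix.posDef_diagonal_iff]
  intro i
  rcases lt_or_eq_of_le (psd_diag_nonneg _ hZ i) with h | h
  · exact h
  exfalso
  -- Z i i = 0
  have hZii : Z i i = 0 := h.symm
  have hWii : W i i = 0 := by
    have h1 := psd_diag_nonneg _ hZW i
    have h2 := psd_diag_nonneg _ hW i
    simp [Matrix.sub_apply, hZii] at h1
    linarith
  have hcol := psd_col_zero W hW i hWii
  have hWe : W *ᵥ (Pi.single i 1) = 0 := by
    ext j
    simp [Matrix.mulVec_single, hcol]
  obtain ⟨c, hc⟩ := (hWnull _).mp hWe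
  have h1 := congrFun hc i
  obtain ⟨j, hj⟩ : ∃ j : Fin n, j ≠ i := by
    have : Nontrivial (Fin n) := Fin.nontrivial_iff_two_le.mpr hn
    exact exists_ne i
  have h0 := congrFun hc j
  simp [Pi.single_eq_same] at h1
  simp [Pi.single_eq_of_ne hj] at h0
  rw [← h1] at h0
  exact one_ne_zero h0.symm
end

section
/- Let H₁, H₂ be real Hilbert spaces, B : H₂ → H₂ a β-cocoercive operator with β > 0, K : H₁ → H₂ and Q : H₂ → H₁ bounded linear operators, and U = (Q* − K)* (1/β)(Q* − K) : H₁ → H₁. Then the operator x ↦ Q B K x + (1/4) U x is monotone on H₁. -/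
open ContinuousLinearMap

theorem stmt_7 (H₁ H₂ : Type*)
    [NormedAddCommGroup H₁] [InnerProductSpace ℝ H₁] [CompleteSpace H₁]
    [NormedAddCommGroup H₂] [InnerProductSpace ℝ H₂] [CompleteSpace H₂]
    (B : H₂ → H₂) (β : ℝ) (hβ : 0 < β)
    (hcoco : ∀ u v : H₂, (inner ℝ (u - v) (B u - B v) : ℝ) ≥ β * ‖B u - B v‖ ^ 2)
    (K : H₁ →L[ℝ] H₂) (Q : H₂ →L[ℝ] H₁)
    (U : H₁ → H₁)
    (hU : U = fun x => (ContinuousLinearMap.adjoint (ContinuousLinearMap.adjoint Q - K))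
      ((1 / β) • ((ContinuousLinearMap.adjoint Q - K) x))) :
    ∀ x y : H₁,
      (0 : ℝ) ≤ inner ℝ (x - y)
        ((Q (B (K x)) + (1 / 4 : ℝ) • U x) - (Q (B (K y)) + (1 / 4 : ℝ) • U y)) := by
  intro x y
  subst hU
  set M := ContinuousLinearMap.adjoint Q - K with hM
  set d := x - y with hd
  set a := B (K x) - B (K y) with ha
  have hKd : K x - K y = K d := by simp [hd]
  have hcoco' : (inner ℝ (K d) a : ℝ) ≥ β * ‖a‖ ^ 2 := by
    rw [ha, ← hKd]; exact hcoco (K x) (K y)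
  have key : (Q (B (K x)) + (1/4 : ℝ) • ContinuousLinearMap.adjoint M ((1/β) • M x))
      - (Q (B (K y)) + (1/4 : ℝ) • ContinuousLinearMap.adjoint M ((1/β) • M y))
      = Q a + (1/(4*β)) • ContinuousLinearMap.adjoint M (M d) := by
    simp only [ha, hd, map_sub, map_smul, smul_sub, smul_smul]
    module
  rw [key]
  rw [inner_add_right, real_inner_smul_right, ContinuousLinearMap.adjoint_inner_right]
  have hQ : (inner ℝ d (Q a) : ℝ) = inner ℝ (M d + K d) a := by
    have : M d + K d = ContinuousLinearMap.adjoint Q d := by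
      simp [hM]
    rw [this, ContinuousLinearMap.adjoint_inner_left]
  rw [hQ, inner_add_left, real_inner_self_eq_norm_sq]
  have habs : |(inner ℝ (M d) a : ℝ)| ≤ ‖M d‖ * ‖a‖ := abs_real_inner_le_norm _ _
  have h1 : -(‖M d‖ * ‖a‖) ≤ (inner ℝ (M d) a : ℝ) := neg_le_of_abs_le habs
  have hq : 0 ≤ β * ‖a‖ ^ 2 - ‖M d‖ * ‖a‖ + 1 / (4 * β) * ‖M d‖ ^ 2 := by
    have heq : β * ‖a‖ ^ 2 - ‖M d‖ * ‖a‖ + 1 / (4 * β) * ‖M d‖ ^ 2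
        = (2 * β * ‖a‖ - ‖M d‖) ^ 2 / (4 * β) := by
      field_simp
      ring
    rw [heq]
    positivity
  linarith
end
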